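/- For all integers n > m > 0, the binomial coefficient satisfies C(n, m) < 2^(n · h(m/n)), where h(x) = -x·log₂(x) - (1-x)·log₂(1-x) is the binary entropy function. -/

import Mathlib

/-- Binary entropy function. -/
noncomputable def binEnt (x : ℝ) : ℝ := -x * Real.logb 2 x - (1 - x) * Real.logb 2 (1 - x)

theorem binom_entropy_bound (n m : ℕ) (hm : 0 < m) (hmn : m < n) :
    (n.choose m : ℝ) < 2 ^ ((n : ℝ) * binEnt ((m : ℝ) / n)) := by
  have hn : (0:ℝ) < n := by exact_mod_cast hm.trans hmn
  set p : ℝ := (m : ℝ) / n with hp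
  have hp0 : 0 < p := by positivity
  have hp1 : p < 1 := by
    rw [hp, div_lt_one hn]; exact_mod_cast hmn
  have hq : 0 < 1 - p := by linarith
  have ha : (0:ℝ) < p ^ m * (1 - p) ^ (n - m) := by positivity
  have hsum : ∑ k ∈ Finset.range (n+1),
      p ^ k * (1-p) ^ (n-k) * (n.choose k : ℝ) = 1 := by
    rw [← add_pow]; simp
  have hlt : p ^ m * (1-p) ^ (n-m) * (n.choose m : ℝ) < 1 := by
    have h2 : p ^ m * (1-p) ^ (n-m) * (n.choose m : ℝ) <
        ∑ k ∈ Finset.range (n+1), p ^ k * (1-p) ^ (n-k) * (n.choose k : ℝ) := by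
      apply Finset.single_lt_sum (i := m) (j := 0) hm.ne
      · exact Finset.mem_range.2 (by omega)
      · exact Finset.mem_range.2 (by omega)
      · simp only [pow_zero, one_mul, Nat.sub_zero, Nat.choose_zero_right, Nat.cast_one,
          mul_one]
        positivity
      · intro k _ _
        positivity
    rwa [hsum] at h2
  have hnp : (n:ℝ) * p = m := by rw [hp]; field_simp [hn.ne']
  have hnq : (n:ℝ) * (1 - p) = ((n - m : ℕ) : ℝ) := by
    push_cast [Nat.cast_sub hmn.le]
    rw [mul_sub, mul_one, hnp]
  have hE : (2:ℝ) ^ ((n : ℝ) * binEnt p) = (p ^ m * (1-p) ^ (n-m))⁻¹ := by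
    have h1 : (n : ℝ) * binEnt p
        = Real.logb 2 p * (-(m:ℝ)) + Real.logb 2 (1-p) * (-((n-m : ℕ):ℝ)) := by
      rw [binEnt, ← hnp, ← hnq]; ring
    rw [h1, Real.rpow_add two_pos, Real.rpow_mul (by norm_num),
      Real.rpow_mul (by norm_num), Real.rpow_logb two_pos (by norm_num) hp0,
      Real.rpow_logb two_pos (by norm_num) hq,
      Real.rpow_neg hp0.le, Real.rpow_neg hq.le,
      Real.rpow_natCast, Real.rpow_natCast, mul_inv]
  rw [hE, inv_eq_one_div, lt_div_iff₀ ha]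
  calc (n.choose m : ℝ) * (p ^ m * (1 - p) ^ (n - m))
      = p ^ m * (1-p) ^ (n-m) * (n.choose m : ℝ) := by ring
    _ < 1 := hlt
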